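/- Let λ be a partition such that s_{λ/(k)} = s_{λ/(1^k)} for every nonnegative integer k (with the convention s_{λ/μ} = 0 when μ ⊄ λ); equivalently, for every k and every finitely supported sequence α of nonnegative integers, the number of SSYT of shape λ/(k) of type α equals the number of SSYT of shape λ/(1^k) of type α. Then λ = (n, n−1, …, 1) for some nonnegative integer n. -/

import Mathlib

open Finset

namespace Stembridge

/-- The staircase partition `ρ_n = (n, n-1, …, 1)` as a Young diagram
(cells `(i, j)` with `i + j < n`, matrix coordinates, 0-indexed). -/
def staircase (n : ℕ) : YoungDiagram where
  cells := (Finset.range n ×ˢ Finset.range n).filter fun c => c.1 + c.2 < n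
  isLowerSet := by
    rintro ⟨i₁, j₁⟩ ⟨i₂, j₂⟩ hle hmem
    obtain ⟨hi, hj⟩ := hle
    simp only [Finset.mem_coe, Finset.mem_filter, Finset.mem_product, Finset.mem_range] at hmem ⊢
    omega

/-- The one-row partition `(k)` as a Young diagram. -/
def rowShape (k : ℕ) : YoungDiagram where
  cells := ({0} : Finset ℕ) ×ˢ Finset.range k
  isLowerSet := by
    rintro ⟨i₁, j₁⟩ ⟨i₂, j₂⟩ hle hmem
    obtain ⟨hi, hj⟩ := hle
    simp only [Finset.mem_coe, Finset.mem_product, Finset.mem_singleton, Finset.mem_range] at hmem ⊢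
    omega

/-- The one-column partition `(1^k)` as a Young diagram. -/
def colShape (k : ℕ) : YoungDiagram where
  cells := Finset.range k ×ˢ ({0} : Finset ℕ)
  isLowerSet := by
    rintro ⟨i₁, j₁⟩ ⟨i₂, j₂⟩ hle hmem
    obtain ⟨hi, hj⟩ := hle
    simp only [Finset.mem_coe, Finset.mem_product, Finset.mem_singleton, Finset.mem_range] at hmem ⊢
    omega

/-- The cells of the skew diagram `λ/μ`. -/
def skewCells (μ lam : YoungDiagram) : Finset (ℕ × ℕ) := lam.cells \ μ.cells

/-- A reverse plane partition on a finite shape of cells: a filling of the cells with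
positive integers which weakly increases along rows (left to right) and down columns.
Entries outside the shape are `0`. -/
structure RPP (shape : Finset (ℕ × ℕ)) where
  entry : ℕ × ℕ → ℕ
  pos : ∀ c ∈ shape, 0 < entry c
  zero_off : ∀ c, c ∉ shape → entry c = 0
  row_le : ∀ i j, (i, j) ∈ shape → (i, j + 1) ∈ shape → entry (i, j) ≤ entry (i, j + 1)
  col_le : ∀ i j, (i, j) ∈ shape → (i + 1, j) ∈ shape → entry (i, j) ≤ entry (i + 1, j)

/-- The weight of a reverse plane partition: `weight P i` is the number of columns of the
shape containing an entry equal to `i`. -/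
def RPP.weight {shape : Finset (ℕ × ℕ)} (P : RPP shape) (i : ℕ) : ℕ :=
  ((shape.filter fun c => P.entry c = i).image Prod.snd).card

/-- A set-valued tableau on a finite shape of cells: a filling of the cells by finite
nonempty sets of positive integers such that `max(left) ≤ min(right)` for horizontally
adjacent cells and `max(upper) < min(lower)` for vertically adjacent cells.
Cells outside the shape carry `∅`. -/
structure SVT (shape : Finset (ℕ × ℕ)) where
  entry : ℕ × ℕ → Finset ℕ
  nonempty : ∀ c ∈ shape, (entry c).Nonempty
  pos : ∀ c ∈ shape, ∀ x ∈ entry c, 0 < x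
  empty_off : ∀ c, c ∉ shape → entry c = ∅
  row_le : ∀ i j, (i, j) ∈ shape → (i, j + 1) ∈ shape →
    ∀ a ∈ entry (i, j), ∀ b ∈ entry (i, j + 1), a ≤ b
  col_lt : ∀ i j, (i, j) ∈ shape → (i + 1, j) ∈ shape →
    ∀ a ∈ entry (i, j), ∀ b ∈ entry (i + 1, j), a < b

/-- The content of a set-valued tableau: `content T i` is the number of cells whose
set contains `i`. -/
def SVT.content {shape : Finset (ℕ × ℕ)} (T : SVT shape) (i : ℕ) : ℕ :=
  (shape.filter fun c => i ∈ T.entry c).card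

/-- The reverse reading word of a set-valued tableau: read the columns from rightmost to
leftmost, each column from top to bottom, the elements within a cell in decreasing order. -/
def SVT.word {shape : Finset (ℕ × ℕ)} (T : SVT shape) : List ℕ :=
  ((List.range (shape.sup Prod.snd + 1)).reverse).flatMap fun j =>
    (List.range (shape.sup Prod.fst + 1)).flatMap fun i =>
      ((T.entry (i, j)).sort (· ≤ ·)).reverse

/-- A word is a lattice word if in every prefix, for every `a ≥ 1`, the number of
occurrences of `a+1` is at most the number of occurrences of `a` (equivalently, the `i`-th
occurrence of `a+1` comes after the `i`-th occurrence of `a`). -/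
def IsLatticeWord (w : List ℕ) : Prop :=
  ∀ t a, 1 ≤ a → (w.take t).count (a + 1) ≤ (w.take t).count a

/-- The content of the staircase partition `ρ_n` as a function: `a ↦ n + 1 - a`
(so `a ↦ 0` for `a > n`), for `a ≥ 1`. -/
def staircaseContent (n : ℕ) : ℕ → ℕ := fun a => n + 1 - a

/-- A semistandard Young tableau on a finite shape of cells: a filling with positive
integers weakly increasing along rows and strictly increasing down columns.
Entries outside the shape are `0`. -/
structure SSYT (shape : Finset (ℕ × ℕ)) where
  entry : ℕ × ℕ → ℕ
  pos : ∀ c ∈ shape, 0 < entry c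
  zero_off : ∀ c, c ∉ shape → entry c = 0
  row_le : ∀ i j, (i, j) ∈ shape → (i, j + 1) ∈ shape → entry (i, j) ≤ entry (i, j + 1)
  col_lt : ∀ i j, (i, j) ∈ shape → (i + 1, j) ∈ shape → entry (i, j) < entry (i + 1, j)

/-- The type of a semistandard Young tableau: `type T i` is the number of entries equal
to `i`. -/
def SSYT.type {shape : Finset (ℕ × ℕ)} (T : SSYT shape) (i : ℕ) : ℕ :=
  (shape.filter fun c => T.entry c = i).card

/-- The cells of the skew shape `ν∗μ`: `μ` occupies the lower-left block and `ν` the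
upper-right block, the top-right corner of `μ` touching the bottom-left corner of `ν`. -/
def starCells (ν μ : YoungDiagram) : Finset (ℕ × ℕ) :=
  ν.cells.image (fun c => (c.1, c.2 + μ.rowLen 0)) ∪
    μ.cells.image (fun c => (c.1 + ν.colLen 0, c.2))

/-- The number of reverse plane partitions of shape `λ/μ` with weight `w` (with the
convention that this is `0` if `μ ⊄ λ`). -/
noncomputable def rppCount (lam μ : YoungDiagram) (w : ℕ →₀ ℕ) : ℕ :=
  if μ.cells ⊆ lam.cells then
    Nat.card {P : RPP (skewCells μ lam) // ∀ i, 1 ≤ i → P.weight i = w i}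
  else 0

/-- The number of set-valued tableaux of shape `λ/μ` with content `m` (with the
convention that this is `0` if `μ ⊄ λ`). -/
noncomputable def svtCount (lam μ : YoungDiagram) (m : ℕ →₀ ℕ) : ℕ :=
  if μ.cells ⊆ lam.cells then
    Nat.card {T : SVT (skewCells μ lam) // ∀ i, 1 ≤ i → T.content i = m i}
  else 0

/-- The number of semistandard Young tableaux of shape `λ/μ` of type `α` (with the
convention that this is `0` if `μ ⊄ λ`). -/
noncomputable def ssytCount (lam μ : YoungDiagram) (α : ℕ →₀ ℕ) : ℕ :=
  if μ.cells ⊆ lam.cells then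
    Nat.card {T : SSYT (skewCells μ lam) // ∀ i, 1 ≤ i → T.type i = α i}
  else 0

/-- The number of set-valued tableaux of a given shape whose reverse reading word is a
lattice word with content `c` (indexed from 1). -/
noncomputable def latticeCount (shape : Finset (ℕ × ℕ)) (c : ℕ → ℕ) : ℕ :=
  Nat.card {T : SVT shape // IsLatticeWord T.word ∧ ∀ a, 1 ≤ a → T.word.count a = c a}

/-! ### Auxiliary machinery for the main theorem -/

section Aux

theorem SSYT.ext' {shape : Finset (ℕ × ℕ)} {T T' : SSYT shape}
    (h : T.entry = T'.entry) : T = T' := by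
  cases T; cases T'; cases h; rfl

/-- A "justified shape": row `a + t` consists of cells `(a + t, b + j)` for `j < f t`,
with `f` weakly decreasing. -/
def Justified (a b : ℕ) (f : ℕ → ℕ) (S : Finset (ℕ × ℕ)) : Prop :=
  (∀ s t : ℕ, s ≤ t → f t ≤ f s) ∧
    ∀ i j : ℕ, ((i, j) ∈ S ↔ a ≤ i ∧ b ≤ j ∧ j - b < f (i - a))

variable {a b : ℕ} {f : ℕ → ℕ} {S : Finset (ℕ × ℕ)}

theorem Justified.fst_ge (hJ : Justified a b f S) {c : ℕ × ℕ} (hc : c ∈ S) : a ≤ c.1 := by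
  have := (hJ.2 c.1 c.2).mp (by simpa using hc)
  exact this.1

theorem Justified.col_fill (hJ : Justified a b f S) {i i' j : ℕ} (hij : (i, j) ∈ S)
    (h1 : a ≤ i') (h2 : i' ≤ i) : (i', j) ∈ S := by
  obtain ⟨hf, hS⟩ := hJ
  rw [hS] at hij ⊢
  exact ⟨h1, hij.2.1, lt_of_lt_of_le hij.2.2 (hf _ _ (by omega))⟩

theorem Justified.entry_ge_aux (hJ : Justified a b f S) (T : SSYT S) :
    ∀ t i j, (i, j) ∈ S → i = a + t → t + 1 ≤ T.entry (i, j) := by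
  intro t
  induction t with
  | zero => intro i j hm _; exact T.pos _ hm
  | succ t ih =>
    rintro i j hm rfl
    have h' : (a + t, j) ∈ S := hJ.col_fill hm (by omega) (by omega)
    have h1 := T.col_lt (a + t) j h' hm
    have h2 := ih (a + t) j h' rfl
    rw [← Nat.add_assoc]
    omega

theorem Justified.entry_ge (hJ : Justified a b f S) (T : SSYT S) {c : ℕ × ℕ}
    (hc : c ∈ S) : c.1 - a + 1 ≤ T.entry c := by
  have ha := hJ.fst_ge hc
  have := hJ.entry_ge_aux T (c.1 - a) c.1 c.2 (by simpa using hc) (by omega)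
  simpa using this

theorem Justified.row_filter (hJ : Justified a b f S) (t : ℕ) :
    S.filter (fun c => c.1 = a + t) = (range (f t)).image (fun j => (a + t, b + j)) := by
  ext ⟨i, j⟩
  simp only [mem_filter, mem_image, mem_range, hJ.2, Prod.mk.injEq]
  constructor
  · rintro ⟨⟨h1, h2, h3⟩, h4⟩
    have hia : i - a = t := by omega
    rw [hia] at h3
    exact ⟨j - b, h3, by omega, by omega⟩
  · rintro ⟨j', hj', rfl, rfl⟩
    have : a + t - a = t := by omega
    rw [this]
    refine ⟨⟨by omega, by omega, by omega⟩, rfl⟩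

theorem Justified.row_card (hJ : Justified a b f S) (t : ℕ) :
    (S.filter (fun c => c.1 = a + t)).card = f t := by
  rw [hJ.row_filter t, Finset.card_image_of_injective, Finset.card_range]
  intro x y hxy
  simpa using hxy

theorem sum_Icc_one (g : ℕ → ℕ) (N : ℕ) :
    ∑ i ∈ Icc 1 N, g (i - 1) = ∑ t ∈ range N, g t := by
  refine Finset.sum_nbij' (fun i => i - 1) (fun t => t + 1) ?_ ?_ ?_ ?_ ?_
  · intro i hi; simp only [mem_Icc] at hi; simp only [mem_range]; omega
  · intro t ht; simp only [mem_range] at ht; simp only [mem_Icc]; omega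
  · intro i hi; simp only [mem_Icc] at hi; omega
  · intro t _; omega
  · intro i _; rfl

theorem Justified.sum_type_le (hJ : Justified a b f S) (T : SSYT S) (N : ℕ) :
    ∑ i ∈ Icc 1 N, T.type i ≤ ∑ t ∈ range N, f t := by
  classical
  have h1 : (S.filter (fun c => T.entry c ≤ N)).card = ∑ i ∈ Icc 1 N, T.type i := by
    rw [Finset.card_eq_sum_card_fiberwise (f := T.entry) (t := Icc 1 N) ?_]
    · refine Finset.sum_congr rfl fun i hi => ?_
      simp only [mem_Icc] at hi
      rw [Finset.filter_filter, SSYT.type]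
      congr 1
      apply Finset.filter_congr
      intro c _
      constructor
      · rintro ⟨_, h⟩; exact h
      · intro hc; exact ⟨by omega, hc⟩
    · intro c hc
      simp only [mem_coe, mem_filter] at hc
      simp only [mem_coe, mem_Icc]
      exact ⟨T.pos c hc.1, hc.2⟩
  have h3 : (S.filter (fun c => c.1 - a < N)).card = ∑ t ∈ range N, f t := by
    rw [Finset.card_eq_sum_card_fiberwise (f := fun c => c.1 - a) (t := range N) ?_]
    · refine Finset.sum_congr rfl fun t ht => ?_
      simp only [mem_range] at ht
      rw [Finset.filter_filter, ← hJ.row_card t]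
      congr 1
      apply Finset.filter_congr
      intro c hc
      have ha := hJ.fst_ge hc
      constructor
      · rintro ⟨_, h⟩; omega
      · intro hc'; omega
    · intro c hc
      simp only [mem_coe, mem_filter] at hc
      simp only [mem_coe, mem_range]
      exact hc.2
  rw [← h1, ← h3]
  apply Finset.card_le_card
  intro c hc
  simp only [mem_filter] at hc ⊢
  have := hJ.entry_ge T hc.1
  exact ⟨hc.1, by omega⟩

/-- The canonical SSYT on a justified shape: entry `t + 1` in row `a + t`. -/
def Justified.canonical (hJ : Justified a b f S) : SSYT S where
  entry c := if c ∈ S then c.1 - a + 1 else 0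
  pos c hc := by simp only [if_pos hc]; omega
  zero_off c hc := by simp only [if_neg hc]
  row_le i j h1 h2 := by simp only [if_pos h1, if_pos h2]; exact le_refl _
  col_lt i j h1 h2 := by
    simp only [if_pos h1, if_pos h2]
    have := hJ.fst_ge h1
    simp only at this
    omega

theorem Justified.canonical_entry (hJ : Justified a b f S) (c : ℕ × ℕ) :
    hJ.canonical.entry c = if c ∈ S then c.1 - a + 1 else 0 := rfl

theorem Justified.canonical_type (hJ : Justified a b f S) {i : ℕ} (hi : 1 ≤ i) :
    hJ.canonical.type i = f (i - 1) := by
  rw [SSYT.type, ← hJ.row_card (i - 1)]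
  congr 1
  apply Finset.filter_congr
  intro c hc
  have ha := hJ.fst_ge hc
  rw [hJ.canonical_entry, if_pos hc]
  constructor <;> intro <;> omega

theorem Justified.entry_eq (hJ : Justified a b f S) (T : SSYT S)
    (hT : ∀ i, 1 ≤ i → T.type i = f (i - 1)) :
    ∀ t, ∀ c ∈ S, c.1 = a + t → T.entry c = t + 1 := by
  intro t
  induction t using Nat.strong_induction_on with
  | _ t ih =>
    intro c hc hct
    have key : S.filter (fun d => T.entry d = t + 1) = S.filter (fun d => d.1 = a + t) := by
      apply Finset.eq_of_subset_of_card_le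
      · intro d hd
        simp only [mem_filter] at hd ⊢
        refine ⟨hd.1, ?_⟩
        have ha := hJ.fst_ge hd.1
        have hge := hJ.entry_ge T hd.1
        by_contra hne
        have hlt : d.1 - a < t := by omega
        have := ih (d.1 - a) hlt d hd.1 (by omega)
        omega
      · rw [hJ.row_card t]
        have := hT (t + 1) (by omega)
        rw [SSYT.type] at this
        simp only [Nat.add_sub_cancel] at this
        omega
    have hcmem : c ∈ S.filter (fun d => T.entry d = t + 1) := by
      rw [key]
      simp only [mem_filter]
      exact ⟨hc, hct⟩
    simp only [mem_filter] at hcmem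
    exact hcmem.2

/-- The type of the canonical filling, as a finitely supported function. -/
noncomputable def alphaOf (a : ℕ) (S : Finset (ℕ × ℕ)) : ℕ →₀ ℕ :=
  ∑ c ∈ S, Finsupp.single (c.1 - a + 1) 1

theorem Justified.alphaOf_apply (hJ : Justified a b f S) {i : ℕ} (hi : 1 ≤ i) :
    alphaOf a S i = f (i - 1) := by
  classical
  rw [alphaOf, Finsupp.finset_sum_apply, ← hJ.row_card (i - 1), Finset.card_filter]
  refine Finset.sum_congr rfl fun c hc => ?_
  have ha := hJ.fst_ge hc
  rw [Finsupp.single_apply]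
  by_cases hcond : c.1 - a + 1 = i
  · rw [if_pos hcond, if_pos (by omega)]
  · rw [if_neg hcond, if_neg (by omega)]

theorem Justified.card_one (hJ : Justified a b f S) :
    Nat.card {T : SSYT S // ∀ i, 1 ≤ i → T.type i = alphaOf a S i} = 1 := by
  have hdef : ∀ i, 1 ≤ i → hJ.canonical.type i = alphaOf a S i := fun i hi => by
    rw [hJ.canonical_type hi, hJ.alphaOf_apply hi]
  have hent : ∀ T : SSYT S, (∀ i, 1 ≤ i → T.type i = alphaOf a S i) →
      ∀ c, T.entry c = if c ∈ S then c.1 - a + 1 else 0 := by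
    intro T hT c
    have hT' : ∀ i, 1 ≤ i → T.type i = f (i - 1) := fun i hi => by
      rw [hT i hi, hJ.alphaOf_apply hi]
    by_cases hc : c ∈ S
    · have ha := hJ.fst_ge hc
      have h1 := hJ.entry_eq T hT' (c.1 - a) c hc (by omega)
      rw [if_pos hc, h1]
    · rw [if_neg hc, T.zero_off c hc]
  haveI : Subsingleton {T : SSYT S // ∀ i, 1 ≤ i → T.type i = alphaOf a S i} := by
    constructor
    rintro ⟨T, hT⟩ ⟨T', hT'⟩
    refine Subtype.ext (SSYT.ext' (funext fun c => ?_))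
    rw [hent T hT c, hent T' hT' c]
  haveI : Nonempty {T : SSYT S // ∀ i, 1 ≤ i → T.type i = alphaOf a S i} :=
    ⟨⟨hJ.canonical, hdef⟩⟩
  exact Nat.card_unique

theorem zero_lt_rowLen_iff (lam : YoungDiagram) (i : ℕ) :
    0 < lam.rowLen i ↔ i < lam.colLen 0 := by
  rw [← YoungDiagram.mem_iff_lt_rowLen, YoungDiagram.mem_iff_lt_colLen]

theorem justifiedA (lam : YoungDiagram) :
    Justified 1 0 (fun t => lam.rowLen (t + 1))
      (skewCells (rowShape (lam.rowLen 0)) lam) := by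
  constructor
  · intro s t hst
    exact lam.rowLen_anti _ _ (by omega)
  · intro i j
    simp only [skewCells, mem_sdiff, YoungDiagram.mem_cells, YoungDiagram.mem_iff_lt_rowLen,
      rowShape, mem_product, mem_singleton, mem_range]
    cases i with
    | zero => simp
    | succ i => simp [Nat.succ_sub_one]

theorem justifiedB (lam : YoungDiagram) :
    Justified 0 1 (fun t => lam.rowLen t - 1)
      (skewCells (colShape (lam.colLen 0)) lam) := by
  constructor
  · intro s t hst
    have := lam.rowLen_anti s t hst
    simp only []
    omega
  · intro i j
    have h0 := zero_lt_rowLen_iff lam i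
    simp only [skewCells, mem_sdiff, YoungDiagram.mem_cells, YoungDiagram.mem_iff_lt_rowLen,
      colShape, mem_product, mem_singleton, mem_range, Nat.sub_zero]
    omega

theorem rowShape_subset (lam : YoungDiagram) {k : ℕ} (hk : k ≤ lam.rowLen 0) :
    (rowShape k).cells ⊆ lam.cells := by
  rintro ⟨i, j⟩ hij
  simp only [rowShape, mem_product, mem_singleton, mem_range] at hij
  rw [YoungDiagram.mem_cells, YoungDiagram.mem_iff_lt_rowLen]
  obtain ⟨rfl, hj⟩ := hij
  omega

theorem colShape_subset (lam : YoungDiagram) {k : ℕ} (hk : k ≤ lam.colLen 0) :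
    (colShape k).cells ⊆ lam.cells := by
  rintro ⟨i, j⟩ hij
  simp only [colShape, mem_product, mem_singleton, mem_range] at hij
  rw [YoungDiagram.mem_cells, YoungDiagram.mem_iff_lt_colLen]
  obtain ⟨hi, rfl⟩ := hij
  omega

theorem colShape_subset_iff (lam : YoungDiagram) {k : ℕ} :
    (colShape k).cells ⊆ lam.cells ↔ k ≤ lam.colLen 0 := by
  constructor
  · intro hsub
    by_contra hlt
    have hmem : ((k - 1 : ℕ), (0 : ℕ)) ∈ (colShape k).cells := by
      simp only [colShape, mem_product, mem_singleton, mem_range]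
      refine ⟨?_, ?_⟩ <;> first | trivial | omega
    have := hsub hmem
    rw [YoungDiagram.mem_cells, YoungDiagram.mem_iff_lt_colLen] at this
    omega
  · exact colShape_subset lam

theorem rowShape_subset_iff (lam : YoungDiagram) {k : ℕ} :
    (rowShape k).cells ⊆ lam.cells ↔ k ≤ lam.rowLen 0 := by
  constructor
  · intro hsub
    by_contra hlt
    have hmem : ((0 : ℕ), (k - 1 : ℕ)) ∈ (rowShape k).cells := by
      simp only [rowShape, mem_product, mem_singleton, mem_range]
      refine ⟨?_, ?_⟩ <;> first | trivial | omega
    have := hsub hmem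
    rw [YoungDiagram.mem_cells, YoungDiagram.mem_iff_lt_rowLen] at this
    omega
  · exact rowShape_subset lam

end Aux

/-- If `s_{λ/(k)} = s_{λ/(1^k)}` for every nonnegative integer `k` (with the convention
that `s_{λ/μ} = 0` when `μ ⊄ λ`), i.e. for every `k` and every finitely supported
sequence `α`, the number of SSYT of shape `λ/(k)` of type `α` equals the number of SSYT
of shape `λ/(1^k)` of type `α`, then `λ` is a staircase `(n, n-1, …, 1)`. -/
theorem staircase_of_ssyt_row_col_eq (lam : YoungDiagram)
    (h : ∀ (k : ℕ) (α : ℕ →₀ ℕ),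
      ssytCount lam (rowShape k) α = ssytCount lam (colShape k) α) :
    ∃ n : ℕ, lam = staircase n := by
  classical
  set n := lam.rowLen 0 with hn
  set m := lam.colLen 0 with hm
  set A := skewCells (rowShape n) lam with hA
  set B := skewCells (colShape m) lam with hB
  have hJA := justifiedA lam
  have hJB := justifiedB lam
  rw [← hn, ← hA] at hJA
  rw [← hm, ← hB] at hJB
  -- the row-side count at k = n is 1
  have hA1 : ssytCount lam (rowShape n) (alphaOf 1 A) = 1 := by
    rw [ssytCount, if_pos (rowShape_subset lam le_rfl)]
    exact hJA.card_one
  -- the column-side count at k = m is 1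
  have hB1 : ssytCount lam (colShape m) (alphaOf 0 B) = 1 := by
    rw [ssytCount, if_pos (colShape_subset lam le_rfl)]
    exact hJB.card_one
  -- n ≤ m
  have hnm : n ≤ m := by
    have h1 := h n (alphaOf 1 A)
    rw [hA1] at h1
    by_contra hlt
    rw [ssytCount, if_neg (by rw [colShape_subset_iff]; omega)] at h1
    omega
  -- m ≤ n
  have hmn : m ≤ n := by
    have h1 := h m (alphaOf 0 B)
    rw [hB1] at h1
    by_contra hlt
    rw [ssytCount, if_neg (by rw [rowShape_subset_iff]; omega)] at h1
    omega
  have hnmeq : n = m := le_antisymm hnm hmn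
  -- From h n (alphaOf 1 A): there is an SSYT of shape B with type alphaOf 1 A
  have hTB : ∃ T : SSYT B, ∀ i, 1 ≤ i → T.type i = alphaOf 1 A i := by
    have h1 := h n (alphaOf 1 A)
    rw [hA1] at h1
    rw [hnmeq, ssytCount, if_pos (colShape_subset lam le_rfl), ← hB] at h1
    have hne : Nat.card {T : SSYT B // ∀ i, 1 ≤ i → T.type i = alphaOf 1 A i} ≠ 0 := by
      omega
    obtain ⟨⟨⟨T, hT⟩⟩, -⟩ := Nat.card_ne_zero.mp hne
    exact ⟨T, hT⟩
  have hTA : ∃ T : SSYT A, ∀ i, 1 ≤ i → T.type i = alphaOf 0 B i := by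
    have h1 := h m (alphaOf 0 B)
    rw [hB1] at h1
    rw [← hnmeq, ssytCount, if_pos (rowShape_subset lam le_rfl), ← hA] at h1
    have hne : Nat.card {T : SSYT A // ∀ i, 1 ≤ i → T.type i = alphaOf 0 B i} ≠ 0 := by
      omega
    obtain ⟨⟨⟨T, hT⟩⟩, -⟩ := Nat.card_ne_zero.mp hne
    exact ⟨T, hT⟩
  -- partial sums inequalities
  have hfafb : ∀ N, ∑ t ∈ range N, lam.rowLen (t + 1) ≤ ∑ t ∈ range N, (lam.rowLen t - 1) := by
    intro N
    obtain ⟨T, hT⟩ := hTB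
    have := hJB.sum_type_le T N
    calc ∑ t ∈ range N, lam.rowLen (t + 1)
        = ∑ i ∈ Icc 1 N, lam.rowLen (i - 1 + 1) := (sum_Icc_one _ N).symm
      _ = ∑ i ∈ Icc 1 N, T.type i := by
          refine Finset.sum_congr rfl fun i hi => ?_
          simp only [mem_Icc] at hi
          rw [hT i hi.1, hJA.alphaOf_apply hi.1]
      _ ≤ ∑ t ∈ range N, (lam.rowLen t - 1) := hJB.sum_type_le T N
  have hfbfa : ∀ N, ∑ t ∈ range N, (lam.rowLen t - 1) ≤ ∑ t ∈ range N, lam.rowLen (t + 1) := by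
    intro N
    obtain ⟨T, hT⟩ := hTA
    calc ∑ t ∈ range N, (lam.rowLen t - 1)
        = ∑ i ∈ Icc 1 N, (lam.rowLen (i - 1) - 1) := (sum_Icc_one _ N).symm
      _ = ∑ i ∈ Icc 1 N, T.type i := by
          refine Finset.sum_congr rfl fun i hi => ?_
          simp only [mem_Icc] at hi
          rw [hT i hi.1, hJB.alphaOf_apply hi.1]
      _ ≤ ∑ t ∈ range N, lam.rowLen (t + 1) := hJA.sum_type_le T N
  have hsum : ∀ N, ∑ t ∈ range N, lam.rowLen (t + 1) = ∑ t ∈ range N, (lam.rowLen t - 1) :=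
    fun N => le_antisymm (hfafb N) (hfbfa N)
  have hstep : ∀ t, lam.rowLen (t + 1) = lam.rowLen t - 1 := by
    intro t
    have h1 := hsum t
    have h2 := hsum (t + 1)
    rw [Finset.sum_range_succ, Finset.sum_range_succ] at h2
    omega
  have hrow : ∀ t, lam.rowLen t = n - t := by
    intro t
    induction t with
    | zero => omega
    | succ t ih => rw [hstep t, ih]; omega
  refine ⟨n, ?_⟩
  ext ⟨i, j⟩
  rw [YoungDiagram.mem_cells, YoungDiagram.mem_iff_lt_rowLen, hrow i]
  simp only [staircase, YoungDiagram.mem_cells, mem_filter, mem_product, mem_range]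
  omega

end Stembridge
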